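/- Let a < b be real numbers and let u be three times continuously differentiable on [a,b]. Then for every x in [a,b], |(u(b)−u(a))/(b−a) − u'(x) − ((a+b−2x)/2)·u''(x)| ≤ ((b−a)^2/6) · sup_{t∈[a,b]} |u'''(t)|. -/

import Mathlib

open Set

/-- Fencing step: `|g x| ≤ B x` and `|g'| ≤ B'` on `[x,c]` gives `|g| ≤ B` on `[x,c]`. -/
lemma fence_abs {x c : ℝ} {g g' B B' : ℝ → ℝ}
    (hg : ∀ t ∈ Icc x c, HasDerivWithinAt g (g' t) (Icc x c) t)
    (hB : ∀ t, HasDerivAt B (B' t) t)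
    (h0 : |g x| ≤ B x)
    (hbound : ∀ t ∈ Ico x c, |g' t| ≤ B' t) :
    ∀ t ∈ Icc x c, |g t| ≤ B t := by
  intro t ht
  have hcont : ContinuousOn g (Icc x c) := fun s hs => (hg s hs).continuousWithinAt
  have hg' : ∀ s ∈ Ico x c, HasDerivWithinAt g (g' s) (Ici s) s := by
    intro s hs
    exact (hg s (Ico_subset_Icc_self hs)).mono_of_mem_nhdsWithin
      (Icc_mem_nhdsGE_of_mem hs)
  have := image_norm_le_of_norm_deriv_right_le_deriv_boundary hcont hg' h0 hB
    (fun s hs => hbound s hs) ht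
  simpa using this

/-- Second-order Taylor remainder bound from the left: `x ≤ c`. -/
lemma taylor2_right {a b M : ℝ} {f f' f'' f''' : ℝ → ℝ}
    (hf' : ∀ t ∈ Icc a b, HasDerivWithinAt f (f' t) (Icc a b) t)
    (hf'' : ∀ t ∈ Icc a b, HasDerivWithinAt f' (f'' t) (Icc a b) t)
    (hf''' : ∀ t ∈ Icc a b, HasDerivWithinAt f'' (f''' t) (Icc a b) t)
    (hM : ∀ t ∈ Icc a b, |f''' t| ≤ M)
    {x c : ℝ} (hx : x ∈ Icc a b) (hc : c ∈ Icc a b) (hxc : x ≤ c) :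
    |f c - f x - f' x * (c - x) - f'' x * (c - x) ^ 2 / 2| ≤ M * (c - x) ^ 3 / 6 := by
  have hsub : Icc x c ⊆ Icc a b := Icc_subset_Icc hx.1 hc.2
  -- step 1 : |f'' t - f'' x| ≤ M * (t - x)
  have h2 : ∀ t ∈ Icc x c, |f'' t - f'' x| ≤ M * (t - x) := by
    apply fence_abs (g' := f''') (B' := fun _ => M)
    · intro t ht
      exact ((hf''' t (hsub ht)).mono hsub).sub_const _
    · intro t
      simpa using ((hasDerivAt_id t).sub_const x).const_mul M
    · simp
    · intro t ht; exact hM t (hsub (Ico_subset_Icc_self ht))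
  -- step 2
  have h1 : ∀ t ∈ Icc x c, |f' t - f' x - f'' x * (t - x)| ≤ M * (t - x) ^ 2 / 2 := by
    apply fence_abs (g' := fun t => f'' t - f'' x) (B' := fun t => M * (t - x))
    · intro t ht
      have := (((hf'' t (hsub ht)).mono hsub).sub_const (f' x)).sub
        (((hasDerivWithinAt_id t (Icc x c)).sub_const x).const_mul (f'' x))
      convert this using 1 <;> first | rfl | ring1 | (simp only [id_eq]; ring)
    · intro t
      have := ((((hasDerivAt_id t).sub_const x).pow 2).const_mul M).div_const 2
      convert this using 1 <;> first | rfl | ring1 | (simp only [id_eq]; ring)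
    · simp
    · intro t ht; exact h2 t (Ico_subset_Icc_self ht)
  -- step 3
  have h0 : ∀ t ∈ Icc x c,
      |f t - f x - f' x * (t - x) - f'' x * (t - x) ^ 2 / 2| ≤ M * (t - x) ^ 3 / 6 := by
    apply fence_abs (g' := fun t => f' t - f' x - f'' x * (t - x))
      (B' := fun t => M * (t - x) ^ 2 / 2)
    · intro t ht
      have := ((((hf' t (hsub ht)).mono hsub).sub_const (f x)).sub
        (((hasDerivWithinAt_id t (Icc x c)).sub_const x).const_mul (f' x))).sub
        (((((hasDerivWithinAt_id t (Icc x c)).sub_const x).pow 2).const_mul (f'' x)).div_const 2)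
      convert this using 1 <;> first | rfl | ring1 | (simp only [id_eq]; ring)
    · intro t
      have := ((((hasDerivAt_id t).sub_const x).pow 3).const_mul M).div_const 6
      convert this using 1 <;> first | rfl | ring1 | (simp only [id_eq]; ring)
    · simp
    · intro t ht; exact h1 t (Ico_subset_Icc_self ht)
  exact h0 c ⟨hxc, le_refl c⟩

/-- Two-sided version. -/
lemma taylor2 {a b M : ℝ} {f f' f'' f''' : ℝ → ℝ}
    (hf' : ∀ t ∈ Icc a b, HasDerivWithinAt f (f' t) (Icc a b) t)
    (hf'' : ∀ t ∈ Icc a b, HasDerivWithinAt f' (f'' t) (Icc a b) t)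
    (hf''' : ∀ t ∈ Icc a b, HasDerivWithinAt f'' (f''' t) (Icc a b) t)
    (hM : ∀ t ∈ Icc a b, |f''' t| ≤ M)
    {x c : ℝ} (hx : x ∈ Icc a b) (hc : c ∈ Icc a b) :
    |f c - f x - f' x * (c - x) - f'' x * (c - x) ^ 2 / 2| ≤ M * |c - x| ^ 3 / 6 := by
  rcases le_total x c with h | h
  · have := taylor2_right hf' hf'' hf''' hM hx hc h
    rwa [abs_of_nonneg (show (0:ℝ) ≤ c - x by linarith)]
  · -- reflect
    set σ : ℝ → ℝ := fun t => a + b - t with hσdef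
    have hmaps : MapsTo σ (Icc a b) (Icc a b) := by
      intro t ht; simp only [hσdef, mem_Icc] at *; constructor <;> linarith [ht.1, ht.2]
    have hσmem : ∀ t ∈ Icc a b, σ t ∈ Icc a b := hmaps
    have hσd : ∀ t, ∀ s : Set ℝ, HasDerivWithinAt σ (-1) s t := by
      intro t s
      simpa using ((hasDerivAt_id t).const_sub (a + b)).hasDerivWithinAt (s := s)
    have hv' : ∀ t ∈ Icc a b, HasDerivWithinAt (f ∘ σ) (f' (σ t) * (-1)) (Icc a b) t :=
      fun t ht => (hf' (σ t) (hσmem t ht)).comp t (hσd t _) hmaps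
    have hv'' : ∀ t ∈ Icc a b,
        HasDerivWithinAt (fun s => f' (σ s) * (-1)) (f'' (σ t)) (Icc a b) t := by
      intro t ht
      have := ((hf'' (σ t) (hσmem t ht)).comp t (hσd t _) hmaps).mul_const (-1 : ℝ)
      convert this using 1 <;> first | rfl | ring1 | (simp only [id_eq]; ring)
    have hv''' : ∀ t ∈ Icc a b,
        HasDerivWithinAt (fun s => f'' (σ s)) (f''' (σ t) * (-1)) (Icc a b) t :=
      fun t ht => (hf''' (σ t) (hσmem t ht)).comp t (hσd t _) hmaps
    have hMv : ∀ t ∈ Icc a b, |f''' (σ t) * (-1)| ≤ M := by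
      intro t ht
      rw [abs_mul, abs_neg, abs_one, mul_one]
      exact hM (σ t) (hσmem t ht)
    have hxc' : σ x ≤ σ c := by simp only [hσdef]; linarith
    have key := taylor2_right (f := f ∘ σ) (f' := fun t => f' (σ t) * (-1))
      (f'' := fun t => f'' (σ t)) (f''' := fun t => f''' (σ t) * (-1))
      hv' hv'' hv''' hMv (hσmem x hx) (hσmem c hc) hxc'
    simp only [Function.comp, hσdef] at key
    have e3 : a + b - (a + b - c) = c := by ring
    have e4 : a + b - (a + b - x) = x := by ring
    rw [e3, e4] at key
    calc |f c - f x - f' x * (c - x) - f'' x * (c - x) ^ 2 / 2|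
        = |f c - f x - f' x * (-1) * (a + b - c - (a + b - x)) -
            f'' x * (a + b - c - (a + b - x)) ^ 2 / 2| := by ring_nf
      _ ≤ M * (a + b - c - (a + b - x)) ^ 3 / 6 := key
      _ = M * |c - x| ^ 3 / 6 := by
          rw [abs_of_nonpos (by linarith)]; ring

/-- Let `a < b` and let `u` be three times continuously differentiable on
`[a,b]` (with derivatives `u'`, `u''`, `u'''`).  Then for every `x ∈ [a,b]`,
`|(u b − u a)/(b−a) − u' x − ((a+b−2x)/2) u'' x| ≤ ((b−a)²/6) · sup_{t∈[a,b]} |u''' t|`. -/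
theorem linear_interp_derivative_expansion
    (a b : ℝ) (hab : a < b) (u u' u'' u''' : ℝ → ℝ)
    (hu' : ∀ x ∈ Set.Icc a b, HasDerivWithinAt u (u' x) (Set.Icc a b) x)
    (hu'' : ∀ x ∈ Set.Icc a b, HasDerivWithinAt u' (u'' x) (Set.Icc a b) x)
    (hu''' : ∀ x ∈ Set.Icc a b, HasDerivWithinAt u'' (u''' x) (Set.Icc a b) x)
    (hcont : ContinuousOn u''' (Set.Icc a b)) :
    ∀ x ∈ Set.Icc a b,
      |(u b - u a) / (b - a) - u' x - (a + b - 2 * x) / 2 * u'' x|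
        ≤ (b - a) ^ 2 / 6 * ⨆ t : Set.Icc a b, |u''' t| := by
  intro x hx
  set M : ℝ := ⨆ t : Set.Icc a b, |u''' t| with hMdef
  have hbdd : BddAbove (Set.range fun t : Set.Icc a b => |u''' ↑t|) := by
    have h := (isCompact_Icc.image_of_continuousOn hcont.abs).bddAbove
    rwa [Set.image_eq_range] at h
  have hM : ∀ t ∈ Set.Icc a b, |u''' t| ≤ M := fun t ht => le_ciSup hbdd ⟨t, ht⟩
  have hM0 : 0 ≤ M := (abs_nonneg _).trans (hM x hx)
  have hba : (0:ℝ) < b - a := by linarith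
  have hxa : (0:ℝ) ≤ x - a := by linarith [hx.1]
  have hbx : (0:ℝ) ≤ b - x := by linarith [hx.2]
  have hbmem : b ∈ Icc a b := right_mem_Icc.2 hab.le
  have hamem : a ∈ Icc a b := left_mem_Icc.2 hab.le
  have hEb := taylor2 hu' hu'' hu''' hM hx hbmem
  have hEa := taylor2 hu' hu'' hu''' hM hx hamem
  rw [abs_of_nonneg hbx] at hEb
  rw [show |a - x| = x - a by rw [abs_sub_comm]; exact abs_of_nonneg hxa] at hEa
  set Eb : ℝ := u b - u x - u' x * (b - x) - u'' x * (b - x) ^ 2 / 2 with hEbdef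
  set Ea : ℝ := u a - u x - u' x * (a - x) - u'' x * (a - x) ^ 2 / 2 with hEadef
  have key : (u b - u a) / (b - a) - u' x - (a + b - 2 * x) / 2 * u'' x
      = (Eb - Ea) / (b - a) := by
    rw [hEbdef, hEadef]; field_simp; ring
  rw [key, abs_div, abs_of_pos hba, div_le_iff₀ hba]
  have htri : |Eb - Ea| ≤ |Eb| + |Ea| := abs_sub _ _
  nlinarith [hEb, hEa, mul_nonneg (mul_nonneg (mul_nonneg hM0 hbx) hxa) hba.le]
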